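/- For every m ≥ 1, the first three occurrences of E_{1,m} in the period-doubling sequence D start at positions 1, 2^m + 1 and 3·2^{m−1} + 1; consequently r_0(E_{1,m}) is the empty word, r_1(E_{1,m}) = A_m, and r_2(E_{1,m}) = A_{m−1}. -/

import Mathlib

/-- The alphabet: letters a, b (for the period-doubling sequence) and c (used by Θ₂). -/
inductive Letter : Type
  | a | b | c
deriving DecidableEq, Repr

open Letter

/-- The period-doubling substitution σ : a ↦ ab, b ↦ aa, extended to words
(the extra letter c is left untouched; it is never produced). -/
def sigmaw : List Letter → List Letter :=
  fun w => w.flatMap fun x => match x with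
    | .a => [.a, .b]
    | .b => [.a, .a]
    | .c => [.c]

/-- A_m = σ^m(a). -/
def A (m : ℕ) : List Letter := sigmaw^[m] [.a]

/-- B_m = σ^m(b). -/
def B (m : ℕ) : List Letter := sigmaw^[m] [.b]

/-- δ_m, the last letter of A_m. -/
def delta (m : ℕ) : Letter := (A m).getLastD .a

/-- The period-doubling sequence D, as a function giving its (n+1)-st letter
(0-indexed); it is the fixed point of σ beginning with a, and A_{n+1} is a
prefix of it of length 2^{n+1} > n. -/
def D (n : ℕ) : Letter := (A (n + 1)).getD n .a

/-- The finite segment D[i .. i+len−1] of the period-doubling sequence,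
with 1-based starting position i. -/
def Dseg (i len : ℕ) : List Letter := (List.range len).map fun k => D (i - 1 + k)

/-- u occurs in the finite word w at (1-based) position i. -/
def OccursAt {α : Type*} (u w : List α) (i : ℕ) : Prop :=
  1 ≤ i ∧ i - 1 + u.length ≤ w.length ∧ (w.drop (i - 1)).take u.length = u

/-- u is a factor of the finite word w. -/
def IsFactor {α : Type*} (u w : List α) : Prop := ∃ i, OccursAt u w i

/-- u occurs in the period-doubling sequence D at (1-based) position i. -/
def DOccursAt (u : List Letter) (i : ℕ) : Prop := 1 ≤ i ∧ Dseg i u.length = u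

/-- u is a factor of the period-doubling sequence D. -/
def FactorD (u : List Letter) : Prop := ∃ i, DOccursAt u i

/-- L(u,p): the starting position of the p-th occurrence (p ≥ 1) of u in D. -/
noncomputable def L (u : List Letter) (p : ℕ) : ℕ := Nat.nth (DOccursAt u) (p - 1)

/-- r_p(u): the p-th return word of u (p ≥ 1), i.e. D[L(u,p) .. L(u,p+1)−1];
r_0(u) is the prefix of D preceding the first occurrence of u. -/
noncomputable def r (u : List Letter) (p : ℕ) : List Letter :=
  if p = 0 then Dseg 1 (L u 1 - 1) else Dseg (L u p) (L u (p + 1) - L u p)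

/-- The morphism τ₁ : a ↦ a, b ↦ bb, extended to words. -/
def tau1 : List Letter → List Letter :=
  fun w => w.flatMap fun x => match x with
    | .a => [.a]
    | .b => [.b, .b]
    | .c => [.c]

/-- The morphism τ₂ : a ↦ ab, b ↦ acac, extended to words. -/
def tau2 : List Letter → List Letter :=
  fun w => w.flatMap fun x => match x with
    | .a => [.a, .b]
    | .b => [.a, .c, .a, .c]
    | .c => [.c]

/-- Θ₁[p], the p-th letter (p ≥ 1) of Θ₁ = τ₁(D): since |τ₁(w)| ≥ |w|, the p-th
letter of Θ₁ is the p-th letter of the image of the length-p prefix of D. -/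
def Theta1 (p : ℕ) : Letter := (tau1 (Dseg 1 p)).getD (p - 1) .a

/-- Θ₂[p], the p-th letter (p ≥ 1) of Θ₂ = τ₂(D). -/
def Theta2 (p : ℕ) : Letter := (tau2 (Dseg 1 p)).getD (p - 1) .a

/-- The envelope word E_{1,m} = A_m with its last letter δ_m deleted. -/
def E1 (m : ℕ) : List Letter := (A m).dropLast

/-- The envelope word E_{2,m} = B_m B_{m−1} with its last letter δ_m deleted. -/
def E2 (m : ℕ) : List Letter := (B m ++ B (m - 1)).dropLast

/-- Enumeration of the envelope words in the order
E_{1,1} ⊏ E_{2,1} ⊏ E_{1,2} ⊏ E_{2,2} ⊏ …. -/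
def Eword (k : ℕ) : List Letter := if k % 2 = 0 then E1 (k / 2 + 1) else E2 (k / 2 + 1)

/-- Env(u): the ⊏-least envelope word having u as a factor. -/
noncomputable def Env (u : List Letter) : List Letter :=
  Eword (sInf {k | IsFactor u (Eword k)})

/-- The letterwise complement exchanging a and b. -/
def comp : Letter → Letter
  | .a => .b
  | .b => .a
  | .c => .c

-- basic lemmas
lemma sigmaw_append (u v : List Letter) : sigmaw (u ++ v) = sigmaw u ++ sigmaw v :=
  List.flatMap_append ..

lemma sigmaw_cons (x : Letter) (t : List Letter) :
    sigmaw (x :: t) = sigmaw [x] ++ sigmaw t := by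
  rw [← sigmaw_append]; rfl

lemma A_succ (m : ℕ) : A (m + 1) = sigmaw (A m) := Function.iterate_succ_apply' ..
lemma B_succ (m : ℕ) : B (m + 1) = sigmaw (B m) := Function.iterate_succ_apply' ..

lemma sigmaw_iter_append (m : ℕ) (u v : List Letter) :
    sigmaw^[m] (u ++ v) = sigmaw^[m] u ++ sigmaw^[m] v := by
  induction m generalizing u v with
  | zero => rfl
  | succ n ih => rw [Function.iterate_succ_apply, Function.iterate_succ_apply,
      Function.iterate_succ_apply, sigmaw_append, ih]

lemma A_succ_eq (m : ℕ) : A (m + 1) = A m ++ B m := by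
  have h1 : A (m + 1) = sigmaw^[m] (sigmaw [Letter.a]) := Function.iterate_succ_apply ..
  have h2 : sigmaw [Letter.a] = [Letter.a] ++ [Letter.b] := rfl
  rw [h1, h2, sigmaw_iter_append]; rfl

lemma B_succ_eq (m : ℕ) : B (m + 1) = A m ++ A m := by
  have h1 : B (m + 1) = sigmaw^[m] (sigmaw [Letter.b]) := Function.iterate_succ_apply ..
  have h2 : sigmaw [Letter.b] = [Letter.a] ++ [Letter.a] := rfl
  rw [h1, h2, sigmaw_iter_append]; rfl

def noC (w : List Letter) : Prop := ∀ x ∈ w, x ≠ Letter.c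

lemma noC_sigmaw {w : List Letter} (h : noC w) : noC (sigmaw w) := by
  intro x hx
  simp only [sigmaw, List.mem_flatMap] at hx
  obtain ⟨y, hy, hxy⟩ := hx
  have := h y hy
  cases y <;> simp_all <;> rcases hxy with rfl | rfl <;> simp

lemma noC_A (m : ℕ) : noC (A m) := by
  induction m with
  | zero => intro x hx; simp [A] at hx; subst hx; simp
  | succ n ih => rw [A_succ]; exact noC_sigmaw ih

lemma length_sigmaw {w : List Letter} (h : noC w) : (sigmaw w).length = 2 * w.length := by
  induction w with
  | nil => rfl
  | cons x t ih =>
    have hx := h x (by simp)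
    have ht : noC t := fun y hy => h y (by simp [hy])
    rw [sigmaw_cons]
    cases x
    · simp [ih ht]; show 2 + 2 * t.length = 2 * (t.length + 1); ring
    · simp [ih ht]; show 2 + 2 * t.length = 2 * (t.length + 1); ring
    · exact absurd rfl hx

lemma length_A (m : ℕ) : (A m).length = 2 ^ m := by
  induction m with
  | zero => rfl
  | succ n ih => rw [A_succ, length_sigmaw (noC_A n), ih, pow_succ, Nat.mul_comm]

lemma A_prefix_succ (m : ℕ) : A m <+: A (m + 1) := ⟨B m, (A_succ_eq m).symm⟩

lemma A_prefix {m n : ℕ} (h : m ≤ n) : A m <+: A n := by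
  induction n with
  | zero => simp_all
  | succ k ih =>
    rcases Nat.lt_or_ge m (k+1) with h' | h'
    · exact (ih (by omega)).trans (A_prefix_succ k)
    · have : m = k + 1 := by omega
      subst this; rfl

lemma getD_prefix {u v : List Letter} (h : u <+: v) {n : ℕ} (hn : n < u.length) :
    v.getD n .a = u.getD n .a := by
  obtain ⟨t, rfl⟩ := h
  exact List.getD_append u t .a n hn

lemma D_eq {k M : ℕ} (h : k < 2 ^ M) : D k = (A M).getD k .a := by
  unfold D
  rcases Nat.le_total (k + 1) M with hle | hle
  · exact (getD_prefix (A_prefix hle) (by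
      rw [length_A]; exact (Nat.lt_two_pow_self (n := k)) |>.trans_le (Nat.pow_le_pow_right (by norm_num) (Nat.le_succ k)))).symm
  · exact getD_prefix (A_prefix hle) (by rw [length_A]; exact h)

lemma sigmaw_getD {w : List Letter} (h : noC w) {n : ℕ} (hn : n < w.length) :
    (sigmaw w).getD (2 * n) .a = .a ∧
    (sigmaw w).getD (2 * n + 1) .a = comp (w.getD n .a) := by
  induction w generalizing n with
  | nil => simp at hn
  | cons x t ih =>
    have hx := h x (by simp)
    have ht : noC t := fun y hy => h y (by simp [hy])
    rw [sigmaw_cons]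
    cases n with
    | zero =>
      cases x
      · exact ⟨rfl, rfl⟩
      · exact ⟨rfl, rfl⟩
      · exact absurd rfl hx
    | succ k =>
      have hk : k < t.length := by simpa using hn
      have hlen : (sigmaw [x]).length = 2 := by
        cases x
        · rfl
        · rfl
        · exact absurd rfl hx
      have e1 : 2 * (k + 1) = (sigmaw [x]).length + (2 * k) := by rw [hlen]; ring
      have e2 : 2 * (k + 1) + 1 = (sigmaw [x]).length + (2 * k + 1) := by rw [hlen]; ring
      constructor
      · rw [e1, List.getD_append_right _ _ _ _ (Nat.le_add_right _ _), Nat.add_sub_cancel_left]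
        exact (ih ht hk).1
      · rw [e2, List.getD_append_right _ _ _ _ (Nat.le_add_right _ _), Nat.add_sub_cancel_left]
        exact ((ih ht hk).2).trans (by simp)

lemma D_even (n : ℕ) : D (2 * n) = .a := by
  have hn : n < 2 ^ n := Nat.lt_two_pow_self (n := n)
  have h2 : 2 * n < 2 ^ (n + 1) := by rw [pow_succ]; omega
  rw [D_eq h2, A_succ]
  exact (sigmaw_getD (noC_A n) (by rw [length_A]; exact hn)).1

lemma D_odd (n : ℕ) : D (2 * n + 1) = comp (D n) := by
  have hn : n < 2 ^ n := Nat.lt_two_pow_self (n := n)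
  have h2 : 2 * n + 1 < 2 ^ (n + 1) := by rw [pow_succ]; omega
  rw [D_eq h2, A_succ, D_eq hn]
  exact (sigmaw_getD (noC_A n) (by rw [length_A]; exact hn)).2

lemma comp_inj : Function.Injective comp := by
  intro x y h
  cases x <;> cases y <;> simp_all [comp]

-- E1 structure
lemma length_E1 (m : ℕ) : (E1 m).length = 2 ^ m - 1 := by
  rw [E1, List.length_dropLast, length_A]

lemma noC_E1 (m : ℕ) : noC (E1 m) := fun x hx => noC_A m x (List.dropLast_subset _ hx)

lemma E1_one : E1 1 = [.a] := by decide

lemma A_ne_nil (m : ℕ) : A m ≠ [] := by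
  intro h
  have := length_A m
  rw [h] at this
  simp at this
  have h2 : 0 < 2 ^ m := Nat.pow_pos (n := m) (by norm_num)
  omega

lemma E1_succ (m : ℕ) : E1 (m + 1) = sigmaw (E1 m) ++ [.a] := by
  obtain ⟨t, x, h⟩ : ∃ t x, A m = t ++ [x] := by
    rcases List.eq_nil_or_concat (A m) with h | ⟨t, x, h⟩
    · exact absurd h (A_ne_nil m)
    · exact ⟨t, x, by rw [h, List.concat_eq_append]⟩
  have hx : x ≠ Letter.c := noC_A m x (by rw [h]; simp)
  have hE : E1 m = t := by rw [E1, h, List.dropLast_concat]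
  rw [E1, A_succ, h, sigmaw_append, hE]
  cases x
  · show (sigmaw t ++ [Letter.a, Letter.b]).dropLast = _
    rw [show [Letter.a, Letter.b] = [Letter.a] ++ [Letter.b] from rfl, ← List.append_assoc,
      List.dropLast_concat]
  · show (sigmaw t ++ [Letter.a, Letter.a]).dropLast = _
    rw [show ([Letter.a, Letter.a] : List Letter) = [Letter.a] ++ [Letter.a] from rfl,
      ← List.append_assoc, List.dropLast_concat]
  · exact absurd rfl hx

def Occ (u : List Letter) (j : ℕ) : Prop := ∀ k < u.length, D (j + k) = u.getD k .a

lemma DOccursAt_iff (u : List Letter) (i : ℕ) :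
    DOccursAt u i ↔ 1 ≤ i ∧ Occ u (i - 1) := by
  unfold DOccursAt Dseg Occ
  constructor
  · rintro ⟨h1, h2⟩
    refine ⟨h1, fun k hk => ?_⟩
    have := congrArg (fun l => l.getD k .a) h2
    simp only [List.getD_eq_getElem?_getD, List.getElem?_map, List.getElem?_range hk] at this
    simpa using this
  · rintro ⟨h1, h2⟩
    refine ⟨h1, ?_⟩
    apply List.ext_getElem (by simp)
    intro n h₁ h₂
    simp only [List.length_map, List.length_range] at h₁
    have := h2 n h₁
    simp only [List.getElem_map, List.getElem_range]
    rw [this, List.getD_eq_getElem?_getD, List.getElem?_eq_getElem h₂]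
    rfl

lemma E1_getD_one {m : ℕ} (hm : 1 ≤ m) : (E1 (m + 1)).getD 1 .a = .b := by
  obtain ⟨m', rfl⟩ := Nat.exists_eq_add_of_le hm
  rw [E1_succ]
  have h1 : (E1 (1 + m')).length = 2 ^ (1 + m') - 1 := length_E1 _
  have hpos : 1 ≤ (E1 (1 + m')).length := by
    rw [h1]
    have : 2 ≤ 2 ^ (1 + m') := by
      calc 2 = 2 ^ 1 := rfl
      _ ≤ _ := Nat.pow_le_pow_right (by norm_num) (by omega)
    omega
  obtain ⟨x, t, hxt⟩ : ∃ x t, E1 (1 + m') = x :: t := by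
    cases h : E1 (1 + m') with
    | nil => rw [h] at hpos; simp at hpos
    | cons x t => exact ⟨x, t, rfl⟩
  have hx : x = Letter.a := by
    have hthis : (E1 (1 + m')).getD 0 Letter.a = x := by rw [hxt]; rfl
    rw [← hthis]
    -- (E1 (1+m')).getD 0 = (A (1+m')).getD 0 = a : first letter of A is a
    have hAfirst : ∀ n, 1 ≤ n → (A n).getD 0 .a = .a := by
      intro n hn
      have := getD_prefix (A_prefix hn) (n := 0) (by rw [length_A]; exact Nat.pow_pos (n := 1) (by norm_num))
      rw [this]; rfl
    have hEA : (E1 (1 + m')).getD 0 .a = (A (1 + m')).getD 0 .a := by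
      rw [E1]
      have hp : (A (1 + m')).dropLast <+: A (1 + m') := List.dropLast_prefix _
      exact (getD_prefix hp (by rw [List.length_dropLast, length_A]; omega)).symm
    rw [hEA, hAfirst _ (by omega)]
  rw [hxt, hx, sigmaw_cons]
  rfl

lemma Occ_step {m : ℕ} (hm : 1 ≤ m) (j : ℕ) :
    Occ (E1 (m + 1)) j ↔ ∃ t, j = 2 * t ∧ Occ (E1 m) t := by
  have hlen1 : (E1 (m + 1)).length = 2 ^ (m + 1) - 1 := length_E1 _
  have hlen : (E1 m).length = 2 ^ m - 1 := length_E1 _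
  have hpow : 2 ≤ 2 ^ m := by
    calc 2 = 2 ^ 1 := rfl
    _ ≤ _ := Nat.pow_le_pow_right (by norm_num) hm
  have hsig : (sigmaw (E1 m)).length = 2 ^ (m + 1) - 2 := by
    rw [length_sigmaw (noC_E1 m), hlen, pow_succ]; omega
  constructor
  · intro h
    -- first: j even
    have hb : D (j + 1) = .b := by
      have := h 1 (by omega)
      rw [this, E1_getD_one hm]
    have hje : Even j := by
      by_contra hodd
      obtain ⟨t, rfl⟩ : ∃ t, j = 2 * t + 1 := by
        rcases Nat.even_or_odd j with he | ho
        · exact absurd he hodd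
        · exact ho
      have : D (2 * t + 1 + 1) = .a := by
        have : 2 * t + 1 + 1 = 2 * (t + 1) := by ring
        rw [this, D_even]
      rw [this] at hb; exact absurd hb (by simp)
    obtain ⟨t, rfl⟩ : ∃ t, j = 2 * t := hje.exists_two_nsmul _ |>.imp fun t ht => by
      simpa [two_mul] using ht
    refine ⟨t, rfl, fun k hk => ?_⟩
    have hk2 : 2 * k + 1 < (E1 (m + 1)).length := by rw [hlen1, pow_succ]; omega
    have := h (2 * k + 1) hk2
    rw [show 2 * t + (2 * k + 1) = 2 * (t + k) + 1 from by ring, D_odd] at this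
    rw [E1_succ] at this
    rw [List.getD_append _ _ _ _ (by rw [hsig]; omega)] at this
    rw [(sigmaw_getD (noC_E1 m) (by rw [hlen]; omega)).2] at this
    exact comp_inj this
  · rintro ⟨t, rfl, h⟩
    intro k hk
    rw [hlen1] at hk
    rw [E1_succ]
    rcases Nat.even_or_odd k with ⟨l, hl⟩ | ⟨l, hl⟩
    · subst hl
      rw [show l + l = 2 * l from by ring] at *
      rw [show 2 * t + 2 * l = 2 * (t + l) from by ring, D_even]
      rcases Nat.lt_or_ge (2 * l) (2 ^ (m + 1) - 2) with h2 | h2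
      · rw [List.getD_append _ _ _ _ (by omega)]
        exact ((sigmaw_getD (noC_E1 m) (by rw [hlen]; omega)).1).symm
      · have : 2 * l = 2 ^ (m + 1) - 2 := by omega
        rw [List.getD_append_right _ _ _ _ (by omega), hsig, this]
        simp
    · subst hl
      have hlt : 2 * l + 1 < 2 ^ (m + 1) - 2 := by
        rcases Nat.lt_or_ge (2 * l + 1) (2 ^ (m+1) - 2) with h2 | h2
        · exact h2
        · exfalso
          have : 2 * l + 1 = 2 ^ (m + 1) - 2 := by omega
          have hev : 2 ^ (m + 1) - 2 = 2 * (2 ^ m - 1) := by rw [pow_succ]; omega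
          omega
      rw [List.getD_append _ _ _ _ (by omega)]
      rw [(sigmaw_getD (noC_E1 m) (by rw [hlen]; omega)).2]
      rw [show 2 * t + (2 * l + 1) = 2 * (t + l) + 1 from by ring, D_odd]
      rw [h l (by omega)]

lemma Occ_char {m : ℕ} (hm : 1 ≤ m) :
    ∀ j, Occ (E1 m) j ↔ ∃ t, j = 2 ^ (m - 1) * t ∧ D t = .a := by
  induction m, hm using Nat.le_induction with
  | base =>
    intro j
    rw [E1_one]
    constructor
    · intro h
      exact ⟨j, by simpa using (h 0 (by simp))⟩
    · rintro ⟨t, ht, ha⟩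
      intro k hk
      simp at hk
      subst hk
      simp at ht
      subst ht
      simpa using ha
  | succ n hn ih =>
    intro j
    rw [Occ_step hn j]
    have hpow : (2 : ℕ) ^ n = 2 * 2 ^ (n - 1) := by
      rw [show n = (n - 1) + 1 from by omega, pow_succ]
      rw [show (n - 1) + 1 - 1 = n - 1 from by omega]
      ring
    constructor
    · rintro ⟨t, rfl, h⟩
      obtain ⟨s, hs, ha⟩ := (ih t).mp h
      exact ⟨s, by rw [hs, Nat.add_sub_cancel, hpow]; ring, ha⟩
    · rintro ⟨s, hs, ha⟩
      refine ⟨2 ^ (n - 1) * s, by rw [hs, Nat.add_sub_cancel, hpow]; ring, ?_⟩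
      exact (ih _).mpr ⟨s, rfl, ha⟩

lemma D_zero : D 0 = .a := by decide
lemma D_one : D 1 = .b := by decide
lemma D_two : D 2 = .a := by decide
lemma D_three : D 3 = .a := by decide

lemma DOccursAt_E1_iff {m : ℕ} (hm : 1 ≤ m) (k : ℕ) :
    DOccursAt (E1 m) k ↔ ∃ t, k = 2 ^ (m - 1) * t + 1 ∧ D t = .a := by
  rw [DOccursAt_iff, Occ_char hm]
  constructor
  · rintro ⟨h1, t, ht, ha⟩
    exact ⟨t, by omega, ha⟩
  · rintro ⟨t, hk, ha⟩
    exact ⟨by omega, t, by omega, ha⟩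

instance (u : List Letter) : DecidablePred (DOccursAt u) := fun i => by
  unfold DOccursAt; infer_instance

lemma count_const {p : ℕ → Prop} [DecidablePred p] {a b : ℕ} (hab : a ≤ b)
    (h : ∀ k, a ≤ k → k < b → ¬ p k) : Nat.count p b = Nat.count p a := by
  induction b, hab using Nat.le_induction with
  | base => rfl
  | succ n hn ih =>
    rw [Nat.count_succ, if_neg (h n hn (by omega)), ih (fun k hk hk' => h k hk (by omega))]
    omega

lemma getD_eq_getElem' (l : List Letter) {n : ℕ} (h : n < l.length) : l.getD n .a = l[n] :=
  List.getD_eq_getElem l .a h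

lemma Dseg_one (m : ℕ) : Dseg 1 (2 ^ m) = A m := by
  apply List.ext_getElem (by simp [Dseg, length_A])
  intro n h1 h2
  simp only [Dseg, List.getElem_map, List.getElem_range]
  rw [show 1 - 1 + n = n from by omega]
  rw [length_A] at h2
  rw [← getD_eq_getElem' _ (by rw [length_A]; exact h2)]
  exact D_eq h2

lemma Dseg_two (m' : ℕ) : Dseg (2 ^ (m' + 1) + 1) (2 ^ m') = A m' := by
  apply List.ext_getElem (by simp [Dseg, length_A])
  intro n h1 h2
  simp only [Dseg, List.getElem_map, List.getElem_range]
  rw [length_A] at h2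
  rw [show 2 ^ (m' + 1) + 1 - 1 + n = 2 ^ (m' + 1) + n from by omega]
  have hP : (0:ℕ) < 2 ^ m' := Nat.pow_pos (n := m') (by norm_num)
  have hlt : 2 ^ (m' + 1) + n < 2 ^ (m' + 1 + 1) := by
    rw [pow_succ, pow_succ]; omega
  rw [D_eq hlt, A_succ_eq (m' + 1)]
  rw [List.getD_append_right _ _ _ _ (by rw [length_A]; omega), length_A, Nat.add_sub_cancel_left]
  rw [B_succ_eq m']
  rw [List.getD_append _ _ _ _ (by rw [length_A]; exact h2)]
  exact getD_eq_getElem' _ (by rw [length_A]; exact h2)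

/-- For every m ≥ 1, the first three occurrences of E_{1,m} in D start at
positions 1, 2^m + 1 and 3·2^{m−1} + 1; consequently r_0(E_{1,m}) = ε,
r_1(E_{1,m}) = A_m and r_2(E_{1,m}) = A_{m−1}. -/
theorem first_occurrences_E1 (m : ℕ) (hm : 1 ≤ m) :
    L (E1 m) 1 = 1 ∧ L (E1 m) 2 = 2 ^ m + 1 ∧ L (E1 m) 3 = 3 * 2 ^ (m - 1) + 1 ∧
    r (E1 m) 0 = [] ∧ r (E1 m) 1 = A m ∧ r (E1 m) 2 = A (m - 1) := by
  obtain ⟨m', rfl⟩ : ∃ m', m = m' + 1 := ⟨m - 1, by omega⟩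
  set p := DOccursAt (E1 (m' + 1)) with hp
  have hchar : ∀ k, p k ↔ ∃ t, k = 2 ^ m' * t + 1 ∧ D t = .a := by
    intro k
    rw [hp, DOccursAt_E1_iff (by omega) k, Nat.add_sub_cancel]
  have hP : (1:ℕ) ≤ 2 ^ m' := Nat.pow_pos (n := m') (by norm_num)
  have hp0 : ¬ p 0 := by rw [hchar]; rintro ⟨t, ht, -⟩; omega
  have hp1 : p 1 := (hchar 1).mpr ⟨0, by omega, D_zero⟩
  have hp2 : p (2 ^ (m' + 1) + 1) := (hchar _).mpr ⟨2, by rw [pow_succ], D_two⟩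
  have hp3 : p (3 * 2 ^ m' + 1) := (hchar _).mpr ⟨3, by ring, D_three⟩
  have gap1 : ∀ k, 2 ≤ k → k < 2 ^ (m' + 1) + 1 → ¬ p k := by
    intro k h2 hk hpk
    obtain ⟨t, hkt, ha⟩ := (hchar k).mp hpk
    rw [pow_succ] at hk
    rcases t with _ | _ | t
    · omega
    · rw [D_one] at ha; exact absurd ha (by simp)
    · have := Nat.mul_le_mul_left (2 ^ m') (show 2 ≤ t + 1 + 1 by omega)
      omega
  have gap2 : ∀ k, 2 ^ (m' + 1) + 2 ≤ k → k < 3 * 2 ^ m' + 1 → ¬ p k := by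
    intro k h2 hk hpk
    obtain ⟨t, hkt, ha⟩ := (hchar k).mp hpk
    rw [pow_succ] at h2
    have h1 : 2 ^ m' * t < 2 ^ m' * 3 := by omega
    have h2' : 2 ^ m' * 2 < 2 ^ m' * t := by omega
    have ht3 : t < 3 := lt_of_mul_lt_mul_left h1 (by omega)
    have ht2 : 2 < t := lt_of_mul_lt_mul_left h2' (by omega)
    omega
  -- counts
  have hc1 : Nat.count p 1 = 0 := by rw [Nat.count_succ, Nat.count_zero, if_neg hp0]
  have hc2 : Nat.count p 2 = 1 := by rw [Nat.count_succ, hc1, if_pos hp1]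
  have hc3 : Nat.count p (2 ^ (m' + 1) + 1) = 1 := by
    rw [count_const (by have := Nat.pow_pos (n := m'+1) (show 0 < 2 by norm_num); omega) gap1, hc2]
  have hc4 : Nat.count p (2 ^ (m' + 1) + 2) = 2 := by
    rw [Nat.count_succ, hc3, if_pos hp2]
  have hc5 : Nat.count p (3 * 2 ^ m' + 1) = 2 := by
    rw [count_const (by rw [pow_succ] at *; omega) gap2, hc4]
  have hn0 : Nat.nth p 0 = 1 := by rw [← hc1]; exact Nat.nth_count hp1
  have hn1 : Nat.nth p 1 = 2 ^ (m' + 1) + 1 := by have := Nat.nth_count hp2; rwa [hc3] at this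
  have hn2 : Nat.nth p 2 = 3 * 2 ^ m' + 1 := by have := Nat.nth_count hp3; rwa [hc5] at this
  have hL1 : L (E1 (m' + 1)) 1 = 1 := hn0
  have hL2 : L (E1 (m' + 1)) 2 = 2 ^ (m' + 1) + 1 := hn1
  have hL3 : L (E1 (m' + 1)) 3 = 3 * 2 ^ m' + 1 := hn2
  refine ⟨hL1, hL2, by rw [hL3, Nat.add_sub_cancel], ?_, ?_, ?_⟩
  · rw [r, if_pos rfl, hL1]
    simp [Dseg]
  · rw [r, if_neg (by norm_num), hL1, hL2]
    rw [show 2 ^ (m' + 1) + 1 - 1 = 2 ^ (m' + 1) from by omega]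
    exact Dseg_one (m' + 1)
  · rw [r, if_neg (by norm_num), hL2]
    rw [show 2 + 1 = 3 from rfl, hL3]
    rw [show 3 * 2 ^ m' + 1 - (2 ^ (m' + 1) + 1) = 2 ^ m' from by rw [pow_succ]; omega]
    rw [Nat.add_sub_cancel]
    exact Dseg_two m'
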